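/- Let H be a Hilbert space, m, n ∈ ℕ, and let f_k = (f_{k1}, …, f_{kn}) ∈ Hⁿ for k = 1, …, m, and g = (g₁, …, g_n) ∈ Hⁿ. Suppose the rank-one sums S_k := Σ_{i=1}^n f_{ki} ⊗ g_i vanish for all k. Then there exist an n × n complex matrix A with all entries of modulus at most 1 and an n × n permutation matrix R such that (R − A) applied entrywise to each vector f_k gives the zero vector of Hⁿ, and A* applied to g gives the zero vector of Hⁿ. -/

import Mathlib

open Matrix

/-- The rank-one operator `x ⊗ y` given by `(x ⊗ y) f = ⟨f, y⟩ x`, where the inner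
product `⟨·,·⟩` is linear in the first argument. -/
noncomputable def rankOne {E F : Type*} [NormedAddCommGroup E] [InnerProductSpace ℂ E]
    [NormedAddCommGroup F] [InnerProductSpace ℂ F] (x : F) (y : E) : E →L[ℂ] F :=
  (innerSL ℂ y).smulRight x

section aux

local notation "⟪" x ", " y "⟫" => @inner ℂ _ _ x y

variable {H : Type*} [NormedAddCommGroup H] [InnerProductSpace ℂ H]

noncomputable def Lmap (n : ℕ) (g : Fin n → H) : EuclideanSpace ℂ (Fin n) →ₗ[ℂ] H where
  toFun c := ∑ i, c i • g i
  map_add' a b := by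
    simp [PiLp.add_apply, add_smul, Finset.sum_add_distrib]
  map_smul' r a := by
    simp [PiLp.smul_apply, smul_smul, Finset.smul_sum]

noncomputable def Tmap (n : ℕ) (g : Fin n → H) :
    EuclideanSpace ℂ (Fin n) →ₗ[ℂ] EuclideanSpace ℂ (Fin n) where
  toFun c := WithLp.toLp 2 (fun i => ⟪g i, Lmap n g c⟫)
  map_add' a b := by
    ext i
    simp [PiLp.add_apply, inner_add_right]
  map_smul' r a := by
    ext i
    simp [PiLp.smul_apply, inner_smul_right]

end aux

section aux2

local notation "⟪" x ", " y "⟫" => @inner ℂ _ _ x y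

variable {H : Type*} [NormedAddCommGroup H] [InnerProductSpace ℂ H]
variable (n : ℕ) (g : Fin n → H)

noncomputable def Usub : Submodule ℂ (EuclideanSpace ℂ (Fin n)) := (LinearMap.ker (Lmap n g))ᗮ

noncomputable def Pp (v : EuclideanSpace ℂ (Fin n)) : EuclideanSpace ℂ (Fin n) :=
  (Submodule.orthogonalProjection (Usub n g) v : EuclideanSpace ℂ (Fin n))

lemma Pp_mem (v : EuclideanSpace ℂ (Fin n)) : Pp n g v ∈ Usub n g :=
  (Submodule.orthogonalProjection (Usub n g) v).2

lemma sub_Pp_mem_ker (v : EuclideanSpace ℂ (Fin n)) : v - Pp n g v ∈ LinearMap.ker (Lmap n g) := by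
  have h := Submodule.sub_starProjection_mem_orthogonal (K := Usub n g) v
  rwa [Usub, Submodule.orthogonal_orthogonal] at h

lemma L_Pp (v : EuclideanSpace ℂ (Fin n)) : Lmap n g (Pp n g v) = Lmap n g v := by
  have h := sub_Pp_mem_ker n g v
  rw [LinearMap.mem_ker, map_sub, sub_eq_zero] at h
  exact h.symm

lemma inner_LL (a b : EuclideanSpace ℂ (Fin n)) :
    ⟪a, Tmap n g b⟫ = ⟪Lmap n g a, Lmap n g b⟫ := by
  simp only [PiLp.inner_apply, RCLike.inner_apply, Tmap, LinearMap.coe_mk, AddHom.coe_mk]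
  rw [show Lmap n g a = ∑ i, a i • g i from rfl, sum_inner]
  simp [inner_smul_left, mul_comm]

lemma ker_Tmap : LinearMap.ker (Tmap n g) = LinearMap.ker (Lmap n g) := by
  ext c
  simp only [LinearMap.mem_ker]
  constructor
  · intro h
    have h2 : ⟪Lmap n g c, Lmap n g c⟫ = 0 := by
      rw [← inner_LL, h, inner_zero_right]
    exact inner_self_eq_zero.mp h2
  · intro h
    ext i
    simp [Tmap, h]

lemma range_Tmap : LinearMap.range (Tmap n g) = Usub n g := by
  apply Submodule.eq_of_le_of_finrank_eq
  · rintro v ⟨c, rfl⟩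
    rw [Usub, Submodule.mem_orthogonal]
    intro u hu
    rw [inner_LL, LinearMap.mem_ker.mp hu, inner_zero_left]
  · have h1 := LinearMap.finrank_range_add_finrank_ker (Tmap n g)
    have h2 := Submodule.finrank_add_finrank_orthogonal (𝕜 := ℂ) (LinearMap.ker (Lmap n g))
    rw [ker_Tmap] at h1
    rw [show (LinearMap.ker (Lmap n g))ᗮ = Usub n g from rfl] at h2
    omega

end aux2

section aux3

local notation "⟪" x ", " y "⟫" => @inner ℂ _ _ x y

variable {H : Type*} [NormedAddCommGroup H] [InnerProductSpace ℂ H]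
variable (n : ℕ) (g : Fin n → H)

noncomputable abbrev ee (j : Fin n) : EuclideanSpace ℂ (Fin n) := EuclideanSpace.single j 1

lemma Pp_apply_eq_inner (v : EuclideanSpace ℂ (Fin n)) (j : Fin n) :
    Pp n g v j = ⟪ee n j, Pp n g v⟫ := by
  rw [EuclideanSpace.inner_single_left]; simp

lemma Pp_herm (i j : Fin n) :
    (starRingEnd ℂ) (Pp n g (ee n i) j) = Pp n g (ee n j) i := by
  rw [Pp_apply_eq_inner, Pp_apply_eq_inner, inner_conj_symm, Pp, Pp]
  exact Submodule.inner_starProjection_left_eq_right _ _ _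

lemma norm_sub_Pp_le (v : EuclideanSpace ℂ (Fin n)) : ‖v - Pp n g v‖ ≤ ‖v‖ := by
  have horth : ⟪Pp n g v, v - Pp n g v⟫ = 0 :=
    Submodule.inner_right_of_mem_orthogonal (Pp_mem n g v)
      (Submodule.sub_starProjection_mem_orthogonal v)
  have hsq := norm_add_sq_eq_norm_sq_add_norm_sq_of_inner_eq_zero _ _ horth
  rw [add_sub_cancel] at hsq
  nlinarith [norm_nonneg (Pp n g v), norm_nonneg v, norm_nonneg (v - Pp n g v)]

lemma abs_bound (i j : Fin n) :
    ‖(if i = j then (1 : ℂ) else 0) - Pp n g (ee n i) j‖ ≤ 1 := by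
  have h1 : (if i = j then (1 : ℂ) else 0) = ee n i j := by
    simp [ee, EuclideanSpace.single_apply, eq_comm]
  have h2 : (if i = j then (1 : ℂ) else 0) - Pp n g (ee n i) j
      = ⟪ee n j - Pp n g (ee n j), ee n i - Pp n g (ee n i)⟫ := by
    have hz : ⟪Pp n g (ee n j), ee n i - Pp n g (ee n i)⟫ = 0 :=
      Submodule.inner_right_of_mem_orthogonal (Pp_mem n g _)
        (Submodule.sub_starProjection_mem_orthogonal _)
    rw [inner_sub_left, hz, sub_zero, h1]
    have := Pp_apply_eq_inner n g (ee n i) j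
    rw [inner_sub_right, ← this]
    have hei : (ee n i : EuclideanSpace ℂ (Fin n)) j = ⟪ee n j, ee n i⟫ := by
      rw [EuclideanSpace.inner_single_left]; simp
    rw [← hei]
  rw [h2]
  calc ‖⟪ee n j - Pp n g (ee n j), ee n i - Pp n g (ee n i)⟫‖
      ≤ ‖ee n j - Pp n g (ee n j)‖ * ‖ee n i - Pp n g (ee n i)‖ := norm_inner_le_norm _ _
    _ ≤ 1 * 1 := by
        apply mul_le_mul
        · simpa using (norm_sub_Pp_le n g (ee n j)).trans_eq (by simp [EuclideanSpace.norm_single])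
        · simpa using (norm_sub_Pp_le n g (ee n i)).trans_eq (by simp [EuclideanSpace.norm_single])
        · exact norm_nonneg _
        · norm_num
    _ = 1 := by norm_num

end aux3


/-- If the rank-one sums `S_k = ∑ i, f_{k i} ⊗ g_i` all vanish, then there are a matrix
`A` with entries of modulus at most `1` and a permutation matrix `R` (given by a
permutation `σ`) such that `(R − A) f_k = 0` for all `k` and `A* g = 0`, where matrices
act on vectors in `Hⁿ` by `(M v)_j = ∑ i, M j i • v i`. -/
theorem exists_matrix_perm_of_rankOne_sum_eq_zero {H : Type*} [NormedAddCommGroup H]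
    [InnerProductSpace ℂ H] (m n : ℕ) (f : Fin m → Fin n → H) (g : Fin n → H)
    (hS : ∀ k, ∑ i, rankOne (f k i) (g i) = 0) :
    ∃ (A : Matrix (Fin n) (Fin n) ℂ) (σ : Equiv.Perm (Fin n)),
      (∀ i j, ‖A i j‖ ≤ 1) ∧
      (∀ k j, ∑ i, ((σ.permMatrix ℂ - A) j i) • f k i = 0) ∧
      (∀ j, ∑ i, (Aᴴ j i) • g i = 0) := by
  classical
  refine ⟨Matrix.of (fun j i => (if j = i then (1 : ℂ) else 0) - Pp n g (ee n j) i),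
    Equiv.refl _, ?_, ?_, ?_⟩
  · intro i j
    exact abs_bound n g i j
  · intro k j
    have hperm : Equiv.Perm.permMatrix ℂ (Equiv.refl (Fin n)) = 1 := by
      rw [Equiv.Perm.permMatrix, Equiv.toPEquiv_refl, PEquiv.toMatrix_refl]
    have hentry : ∀ i, (Equiv.Perm.permMatrix ℂ (Equiv.refl (Fin n)) -
        Matrix.of (fun j i => (if j = i then (1 : ℂ) else 0) - Pp n g (ee n j) i)) j i
        = Pp n g (ee n j) i := by
      intro i
      rw [hperm, Matrix.sub_apply, Matrix.one_apply, Matrix.of_apply]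
      ring
    simp only [hentry]
    -- use hS
    have hmem : Pp n g (ee n j) ∈ LinearMap.range (Tmap n g) := by
      rw [range_Tmap]; exact Pp_mem n g _
    obtain ⟨c, hc⟩ := hmem
    have h0 : (∑ i, rankOne (f k i) (g i)) (Lmap n g c) = 0 := by
      rw [hS k]; rfl
    rw [ContinuousLinearMap.sum_apply] at h0
    simp only [rankOne, ContinuousLinearMap.smulRight_apply, innerSL_apply_apply] at h0
    have hval : ∀ i, Pp n g (ee n j) i = @inner ℂ _ _ (g i) (Lmap n g c) := by
      intro i
      rw [← hc]; rfl
    simp only [hval]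
    exact h0
  · intro j
    have hAH : ∀ i, (Matrix.of (fun j i => (if j = i then (1 : ℂ) else 0) - Pp n g (ee n j) i))ᴴ j i
        = (if i = j then (1 : ℂ) else 0) - Pp n g (ee n j) i := by
      intro i
      rw [Matrix.conjTranspose_apply, Matrix.of_apply]
      simp only [star_sub]
      rw [show (star (Pp n g (ee n i) j) : ℂ) = (starRingEnd ℂ) (Pp n g (ee n i) j) from rfl,
        Pp_herm]
      congr 1
      simp [apply_ite]
    simp only [hAH, sub_smul, Finset.sum_sub_distrib]
    have h1 : ∑ i, (if i = j then (1 : ℂ) else 0) • g i = g j := by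
      simp [ite_smul]
    have h2 : ∑ i, Pp n g (ee n j) i • g i = g j := by
      have : ∑ i, Pp n g (ee n j) i • g i = Lmap n g (Pp n g (ee n j)) := rfl
      rw [this, L_Pp]
      show ∑ i, (ee n j) i • g i = g j
      simp [ee, EuclideanSpace.single_apply, ite_smul]
    rw [h1, h2, sub_self]
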